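/- For any finite simple graph G, the sum over all vertices of the curvature K(v) = ∑_{k≥0} (-1)^k V_{k-1}(v)/(k+1) equals the Euler characteristic χ(G) = ∑_{k≥0} (-1)^k v_k (Gauss-Bonnet for graphs). -/

import Mathlib

open Finset

attribute [local instance] Classical.propDecidable

variable {V : Type*}

/-- Number of complete subgraphs `K_k` of `G` whose vertex set lies inside `A`. -/
noncomputable def cliquesIn [Fintype V] (G : SimpleGraph V) (k : ℕ) (A : Finset V) : ℕ :=
  ((G.cliqueFinset k).filter (fun s => s ⊆ A)).card

/-- Euler characteristic of the subgraph of `G` induced on `A`. -/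
noncomputable def eulerCharOn [Fintype V] (G : SimpleGraph V) (A : Finset V) : ℤ :=
  ∑ k ∈ Finset.range (Fintype.card V + 1), (-1 : ℤ) ^ k * (cliquesIn G (k + 1) A : ℤ)

/-- Euler characteristic of `G`. -/
noncomputable def eulerChar [Fintype V] (G : SimpleGraph V) : ℤ :=
  eulerCharOn G Finset.univ

/-- Curvature of `G` at `v`. -/
noncomputable def curvature [Fintype V] (G : SimpleGraph V) (v : V) : ℚ :=
  ∑ k ∈ Finset.range (Fintype.card V + 1),
    (-1 : ℚ) ^ k * (cliquesIn G k (G.neighborFinset v) : ℚ) / (k + 1)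

/-- Exit set: neighbors of `v` with smaller `f`-value. -/
noncomputable def exitSet [Fintype V] (G : SimpleGraph V) (f : V → ℝ) (v : V) : Finset V :=
  (G.neighborFinset v).filter (fun w => f w < f v)

/-- Entrance set: neighbors of `v` with larger `f`-value. -/
noncomputable def enterSet [Fintype V] (G : SimpleGraph V) (f : V → ℝ) (v : V) : Finset V :=
  (G.neighborFinset v).filter (fun w => f v < f w)

/-- Poincaré–Hopf index of `f` at `v`. -/
noncomputable def indexOf [Fintype V] (G : SimpleGraph V) (f : V → ℝ) (v : V) : ℤ :=
  1 - eulerCharOn G (exitSet G f v)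

lemma key [Fintype V] (G : SimpleGraph V) (k : ℕ) :
    ∑ v : V, cliquesIn G k (G.neighborFinset v) = (k + 1) * cliquesIn G (k + 1) Finset.univ := by
  classical
  have hL : ∑ v : V, cliquesIn G k (G.neighborFinset v) =
      ((Finset.univ : Finset V).sigma fun v =>
        (G.cliqueFinset k).filter (fun s => s ⊆ G.neighborFinset v)).card := by
    rw [Finset.card_sigma]
    rfl
  have hR : (k + 1) * cliquesIn G (k + 1) Finset.univ =
      ((G.cliqueFinset (k + 1)).sigma fun t => t).card := by
    rw [Finset.card_sigma]
    have h1 : ∀ t ∈ G.cliqueFinset (k + 1), t.card = k + 1 := fun t ht =>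
      (SimpleGraph.mem_cliqueFinset_iff.mp ht).2
    rw [Finset.sum_congr rfl h1, Finset.sum_const, smul_eq_mul, mul_comm]
    congr 1
    simp [cliquesIn]
  rw [hL, hR]
  apply Finset.card_bij (fun p _ => (⟨insert p.1 p.2, p.1⟩ : (_ : Finset V) × V))
  · rintro ⟨v, s⟩ hp
    simp only [Finset.mem_sigma, Finset.mem_univ, Finset.mem_filter, true_and] at hp ⊢
    obtain ⟨hs, hsub⟩ := hp
    refine ⟨?_, Finset.mem_insert_self _ _⟩
    rw [SimpleGraph.mem_cliqueFinset_iff] at hs ⊢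
    exact hs.insert fun b hb => (SimpleGraph.mem_neighborFinset _ _ _).mp (hsub hb)
  · rintro ⟨v, s⟩ hp ⟨w, u⟩ hq h
    simp only [Finset.mem_sigma, Finset.mem_univ, Finset.mem_filter, true_and] at hp hq
    simp only [Sigma.mk.inj_iff] at h
    obtain ⟨h1, h2⟩ := h
    have h2' : v = w := eq_of_heq h2
    subst h2'
    have hvns : v ∉ s := fun hv => G.irrefl ((SimpleGraph.mem_neighborFinset _ _ _).mp (hp.2 hv))
    have hvnu : v ∉ u := fun hv => G.irrefl ((SimpleGraph.mem_neighborFinset _ _ _).mp (hq.2 hv))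
    have : s = u := by
      have := congrArg (fun t => Finset.erase t v) h1
      simpa [Finset.erase_insert hvns, Finset.erase_insert hvnu] using this
    simp [this]
  · rintro ⟨t, v⟩ hq
    simp only [Finset.mem_sigma] at hq
    obtain ⟨ht, hv⟩ := hq
    rw [SimpleGraph.mem_cliqueFinset_iff] at ht
    refine ⟨⟨v, t.erase v⟩, ?_, ?_⟩
    · simp only [Finset.mem_sigma, Finset.mem_univ, Finset.mem_filter, true_and]
      constructor
      · rw [SimpleGraph.mem_cliqueFinset_iff]
        refine ⟨ht.1.subset (Finset.erase_subset _ _), ?_⟩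
        rw [Finset.card_erase_of_mem hv, ht.2]; rfl
      · intro b hb
        rw [Finset.mem_erase] at hb
        rw [SimpleGraph.mem_neighborFinset]
        exact ht.1 hv hb.2 (Ne.symm hb.1)
    · simp [Finset.insert_erase hv]

/-- **Gauss–Bonnet for graphs.** For any finite simple graph, the sum of the curvatures
`K(v) = ∑_k (-1)^k V_{k-1}(v)/(k+1)` over all vertices equals the Euler characteristic
`χ(G) = ∑_k (-1)^k v_k`. -/
theorem gauss_bonnet [Fintype V] (G : SimpleGraph V) :
    ∑ v : V, curvature G v = (eulerChar G : ℚ) := by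
  rw [eulerChar, eulerCharOn]
  push_cast
  unfold curvature
  rw [Finset.sum_comm]
  refine Finset.sum_congr rfl fun k _ => ?_
  have hk : ∑ v : V, ((cliquesIn G k (G.neighborFinset v) : ℚ)) =
      ((k : ℚ) + 1) * (cliquesIn G (k + 1) Finset.univ : ℚ) := by
    exact_mod_cast key G k
  rw [← Finset.sum_div, ← Finset.mul_sum, hk]
  have hne : ((k : ℚ) + 1) ≠ 0 := by positivity
  field_simp
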